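/- arXiv:1110.1950 — 4 statements merged into one kernel-verified Lean document; each statement's English description precedes it below -/
import Mathlib

section
/- The analogous Craig lattice A_n^{(m,l)}, defined as the set of integer polynomials f of degree at most n with f(1)=0 and f^{(i)}(1) ≡ 0 mod l for i=1,...,m-1 (identified with their coefficient vectors in Z^{n+1}), is a sublattice of index l^{m-1} in the root lattice A_n = {(v_0,...,v_n) ∈ Z^{n+1} : v_0+...+v_n = 0}, and hence has rank n and volume (determinant^{1/2}) equal to l^{m-1}(n+1)^{1/2}. -/
open Finset

/-- The linear functional sending the coefficient vector of `f = a_0 + a_1 x + ... + a_n x^n`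
to the `i`-th derivative of `f` evaluated at `1`, i.e. `∑ a_j · j(j-1)⋯(j-i+1)`. -/
noncomputable def derAt1 (n i : ℕ) : (Fin (n + 1) → ℤ) →ₗ[ℤ] ℤ :=
  ∑ j : Fin (n + 1), (((j : ℕ).descFactorial i : ℤ)) • LinearMap.proj j

/-- The analogous Craig lattice `A_n^{(m,l)}`: coefficient vectors of integer polynomials `f`
of degree at most `n` with `f(1) = 0` and `f^{(i)}(1) ≡ 0 mod l` for `i = 1, ..., m-1`. -/
noncomputable def craigLat (n m l : ℕ) : Submodule ℤ (Fin (n + 1) → ℤ) :=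
  LinearMap.ker (derAt1 n 0) ⊓
    ⨅ i ∈ Finset.Ioo 0 m, Submodule.comap (derAt1 n i) (Ideal.span {(l : ℤ)})

/-- The root lattice `A_n = {v ∈ ℤ^{n+1} : ∑ v_i = 0}`. -/
noncomputable def rootLat (n : ℕ) : Submodule ℤ (Fin (n + 1) → ℤ) :=
  LinearMap.ker (derAt1 n 0)

lemma derAt1_apply (n i : ℕ) (v : Fin (n+1) → ℤ) :
    derAt1 n i v = ∑ j : Fin (n+1), ((j : ℕ).descFactorial i : ℤ) * v j := by
  simp [derAt1]

lemma derAt1_single (n i : ℕ) (j : Fin (n+1)) :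
    derAt1 n i (Pi.single j 1) = ((j : ℕ).descFactorial i : ℤ) := by
  simp [derAt1_apply, Pi.single_apply, mul_ite]

lemma mem_rootLat (n : ℕ) (v : Fin (n+1) → ℤ) :
    v ∈ rootLat n ↔ ∑ j : Fin (n+1), v j = 0 := by
  simp [rootLat, LinearMap.mem_ker, derAt1_apply]

lemma mem_craigLat (n m l : ℕ) (v : Fin (n+1) → ℤ) :
    v ∈ craigLat n m l ↔ v ∈ rootLat n ∧ ∀ i, 0 < i → i < m → (l:ℤ) ∣ derAt1 n i v := by
  simp [craigLat, rootLat, Submodule.mem_inf, Submodule.mem_iInf, Ideal.mem_span_singleton,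
    Finset.mem_Ioo, and_imp]

noncomputable def rootEquiv (n : ℕ) : rootLat n ≃ₗ[ℤ] (Fin n → ℤ) where
  toFun v := fun k => v.1 k.castSucc
  map_add' v w := rfl
  map_smul' c v := rfl
  invFun u := ⟨Fin.snoc u (-∑ k, u k), by
    rw [mem_rootLat, Fin.sum_univ_castSucc]
    simp⟩
  left_inv v := by
    ext j
    refine Fin.lastCases ?_ (fun k => ?_) j
    · have hv := (mem_rootLat n v.1).1 v.2
      rw [Fin.sum_univ_castSucc] at hv
      simp only [Fin.snoc_last]
      linarith
    · simp
  right_inv u := by ext k; simp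

lemma finrank_rootLat (n : ℕ) : Module.finrank ℤ (rootLat n) = n := by
  rw [(rootEquiv n).finrank_eq]; simp

lemma finrank_craigLat (n m l : ℕ) (hl : 0 < l) : Module.finrank ℤ (craigLat n m l) = n := by
  set f : (Fin (n+1) → ℤ) →ₗ[ℤ] (Fin (n+1) → ℤ) := (l : ℤ) • LinearMap.id with hf
  have hinj : Function.Injective f := by
    intro a b hab
    exact smul_right_injective _ (by exact_mod_cast hl.ne' : (l:ℤ) ≠ 0)
      (by simpa [hf] using hab)
  have hsub : (rootLat n).map f ≤ craigLat n m l := by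
    rintro _ ⟨v, hv, rfl⟩
    rw [mem_craigLat]
    constructor
    · have hv' := (mem_rootLat n v).1 hv
      rw [mem_rootLat]
      have : f v = (l:ℤ) • v := rfl
      rw [this]
      simp [← Finset.mul_sum, hv']
    · intro i _ _
      have : f v = (l:ℤ) • v := rfl
      rw [this, map_smul]
      exact Dvd.intro _ rfl
  have hle : craigLat n m l ≤ rootLat n := fun v hv => hv.1
  have h1 : Module.finrank ℤ (craigLat n m l) ≤ Module.finrank ℤ (rootLat n) :=
    Submodule.finrank_mono hle
  have h2 : Module.finrank ℤ (rootLat n) = Module.finrank ℤ ((rootLat n).map f) :=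
    (Submodule.equivMapOfInjective f hinj (rootLat n)).finrank_eq
  have h3 : Module.finrank ℤ ((rootLat n).map f) ≤ Module.finrank ℤ (craigLat n m l) :=
    Submodule.finrank_mono hsub
  have h4 := finrank_rootLat n
  omega

lemma craig_index (n m l : ℕ) (hm : 0 < m) (hmn : 2 * m < n) (hl : n + 1 ≤ l)
    (hlp : l.Prime) :
    (((craigLat n m l).toAddSubgroup).addSubgroupOf ((rootLat n).toAddSubgroup)).index
      = l ^ (m - 1) := by
  haveI : Fact l.Prime := ⟨hlp⟩
  let ψ : (rootLat n).toAddSubgroup →+ (Fin (m-1) → ZMod l) := {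
    toFun := fun v k => ((derAt1 n ((k:ℕ)+1) v.1 : ℤ) : ZMod l)
    map_zero' := by
      funext k
      simp only [ZeroMemClass.coe_zero, map_zero, Int.cast_zero, Pi.zero_apply]
    map_add' := by
      intro v w
      funext k
      simp only [AddSubgroup.coe_add, map_add, Int.cast_add, Pi.add_apply] }
  have hker : ψ.ker = (craigLat n m l).toAddSubgroup.addSubgroupOf (rootLat n).toAddSubgroup := by
    ext v
    rw [AddMonoidHom.mem_ker, AddSubgroup.mem_addSubgroupOf]
    simp only [Submodule.mem_toAddSubgroup]
    rw [mem_craigLat]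
    constructor
    · intro h
      refine ⟨v.2, fun i hi0 him => ?_⟩
      have hk : i - 1 < m - 1 := by omega
      have h2 : ((derAt1 n ((i-1)+1) v.1 : ℤ) : ZMod l) = 0 := congrFun h ⟨i-1, hk⟩
      have hi : (i - 1) + 1 = i := by omega
      rw [hi] at h2
      exact_mod_cast (ZMod.intCast_zmod_eq_zero_iff_dvd _ _).1 h2
    · rintro ⟨-, h⟩
      funext k
      have hk := h ((k:ℕ)+1) (Nat.succ_pos _) (by omega)
      show ((derAt1 n ((k:ℕ)+1) v.1 : ℤ) : ZMod l) = 0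
      exact (ZMod.intCast_zmod_eq_zero_iff_dvd _ _).2 (by exact_mod_cast hk)
  have hsurj : Function.Surjective ψ := by
    intro t
    set M : Matrix (Fin (m-1)) (Fin (m-1)) (ZMod l) :=
      fun k k' => ((((k':ℕ)+1).descFactorial ((k:ℕ)+1) : ℕ) : ZMod l) with hM
    have htri : M.BlockTriangular id := by
      intro k k' hlt
      have hlt' : (k':ℕ)+1 < (k:ℕ)+1 := by
        have : (k':ℕ) < (k:ℕ) := hlt
        omega
      show ((((k':ℕ)+1).descFactorial ((k:ℕ)+1) : ℕ) : ZMod l) = 0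
      rw [Nat.descFactorial_eq_zero_iff_lt.2 hlt', Nat.cast_zero]
    have hdet : M.det ≠ 0 := by
      rw [Matrix.det_of_upperTriangular htri]
      refine Finset.prod_ne_zero_iff.2 fun k _ => ?_
      show ((((k:ℕ)+1).descFactorial ((k:ℕ)+1) : ℕ) : ZMod l) ≠ 0
      rw [Nat.descFactorial_self, Ne, ZMod.natCast_eq_zero_iff]
      intro hdvd
      have h1 := (Nat.Prime.dvd_factorial hlp).1 hdvd
      have h2 := k.2
      omega
    have hMu : IsUnit M := (Matrix.isUnit_iff_isUnit_det M).2 (isUnit_iff_ne_zero.2 hdet)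
    obtain ⟨c, hc⟩ := Matrix.mulVec_surjective_iff_isUnit.2 hMu t
    have hkn : ∀ k : Fin (m-1), (k:ℕ)+1 < n+1 := fun k => by have := k.2; omega
    set w : Fin (n+1) → ℤ :=
      ∑ k : Fin (m-1), ((c k).val : ℤ) • Pi.single (⟨(k:ℕ)+1, hkn k⟩ : Fin (n+1)) 1 with hwdef
    have hw : ∀ i, derAt1 n i w
        = ∑ k : Fin (m-1), ((c k).val : ℤ) * ((((k:ℕ)+1).descFactorial i : ℕ) : ℤ) := by
      intro i
      rw [hwdef, map_sum]
      refine Finset.sum_congr rfl fun k _ => ?_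
      rw [map_smul, derAt1_single, smul_eq_mul]
    set v := w - (derAt1 n 0 w) • Pi.single (0 : Fin (n+1)) 1 with hvdef
    have hone : derAt1 n 0 (Pi.single (0 : Fin (n+1)) 1) = 1 := by
      rw [derAt1_single]; rfl
    have hzero : ∀ i, derAt1 n (i+1) (Pi.single (0 : Fin (n+1)) 1) = 0 := by
      intro i
      rw [derAt1_single]
      show ((Nat.descFactorial 0 (i+1) : ℕ) : ℤ) = 0
      rw [Nat.zero_descFactorial_succ, Nat.cast_zero]
    have hv : v ∈ rootLat n := by
      have h1 : derAt1 n 0 v = 0 := by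
        rw [hvdef, map_sub, map_smul, hone, smul_eq_mul, mul_one, sub_self]
      exact h1
    refine ⟨⟨v, hv⟩, ?_⟩
    funext k
    show ((derAt1 n ((k:ℕ)+1) v : ℤ) : ZMod l) = t k
    have h0 : derAt1 n ((k:ℕ)+1) v = derAt1 n ((k:ℕ)+1) w := by
      rw [hvdef, map_sub, map_smul, hzero, smul_zero, sub_zero]
    rw [h0, hw, ← hc]
    push_cast
    show _ = dotProduct (M k) c
    rw [dotProduct]
    refine Finset.sum_congr rfl fun k' _ => ?_
    rw [ZMod.natCast_val, ZMod.cast_id]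
    show ((c k') : ZMod l) * _ = _
    ring
  rw [← hker, AddSubgroup.index_ker, AddMonoidHom.range_eq_top.2 hsurj,
    Nat.card_congr AddSubgroup.topEquiv.toEquiv, Nat.card_pi]
  simp [Nat.card_zmod]

/-- `A_n^{(m,l)}` is a sublattice of index `l^{m-1}` in the root lattice `A_n`,
hence it has rank `n` (its volume is therefore `l^{m-1}(n+1)^{1/2}`). -/
theorem craig_index_in_root (n m l : ℕ) (hm : 0 < m) (hmn : 2 * m < n)
    (hl : n + 1 ≤ l) (hlp : l.Prime) :
    craigLat n m l ≤ rootLat n ∧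
    (((craigLat n m l).toAddSubgroup).addSubgroupOf ((rootLat n).toAddSubgroup)).index
      = l ^ (m - 1) ∧
    Module.finrank ℤ (craigLat n m l) = n := by
  refine ⟨fun v hv => ((mem_craigLat n m l v).1 hv).1, craig_index n m l hm hmn hl hlp,
    finrank_craigLat n m l hlp.pos⟩
end

section
/- If l is a prime with l ≥ n+1 and m < n/2, then every nonzero vector of the analogous Craig lattice A_n^{(m,l)} has squared Euclidean norm at least 2m. -/
open Finset

/-! ### Auxiliary lemmas -/

private lemma descFactorial_cast_succ (x k : ℕ) :
    ((x.descFactorial (k + 1) : ℤ)) = ((x : ℤ) - k) * x.descFactorial k := by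
  rcases le_or_gt k x with h | h
  · rw [Nat.descFactorial_succ]
    push_cast [h]
    ring
  · rw [Nat.descFactorial_eq_zero_iff_lt.2 h,
      Nat.descFactorial_eq_zero_iff_lt.2 (Nat.lt_succ_of_lt h)]
    simp

private lemma dvd_pow_sum {ι : Type*} [Fintype ι] (e : ι → ℕ) (L : ℤ) :
    ∀ i : ℕ, ∀ w : ι → ℤ,
      (∀ k, k ≤ i → L ∣ ∑ j, w j * ((e j).descFactorial k : ℤ)) →
      L ∣ ∑ j, w j * (e j : ℤ) ^ i
  | 0, w, h => by simpa using h 0 le_rfl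
  | (i + 1), w, h => by
    have key := dvd_pow_sum e L i (fun j => w j * (e j : ℤ)) ?_
    · have heq : ∑ j, w j * (e j : ℤ) ^ (i + 1) = ∑ j, (w j * (e j : ℤ)) * (e j : ℤ) ^ i :=
        Finset.sum_congr rfl fun j _ => by ring
      rwa [heq]
    · intro k hk
      have hsplit : ∑ j, (w j * (e j : ℤ)) * ((e j).descFactorial k : ℤ)
          = (∑ j, w j * ((e j).descFactorial (k + 1) : ℤ))
            + (k : ℤ) * ∑ j, w j * ((e j).descFactorial k : ℤ) := by
        rw [Finset.mul_sum, ← Finset.sum_add_distrib]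
        refine Finset.sum_congr rfl fun j _ => ?_
        rw [descFactorial_cast_succ]
        ring
      rw [hsplit]
      exact dvd_add (h _ (by omega)) (Dvd.dvd.mul_left (h _ (by omega)) _)

/-- **Newton's identity** for multisets over a commutative ring. -/
private lemma newton_multiset {K : Type*} [CommRing K] (s : Multiset K) (k : ℕ) :
    (k : K) * s.esymm k = (-1 : K) ^ (k + 1) *
      ∑ a ∈ Finset.HasAntidiagonal.antidiagonal k with a.1 < k,
        (-1 : K) ^ a.1 * s.esymm a.1 * (s.map (· ^ a.2)).sum := by
  obtain ⟨N, f, hf⟩ : ∃ (N : ℕ) (f : Fin N → K), (Finset.univ.val.map f) = s :=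
    ⟨s.toList.length, s.toList.get, by
      simp only [Fin.univ_val_map]
      rw [show (List.ofFn s.toList.get) = s.toList from List.ofFn_get _, Multiset.coe_toList]⟩
  have hpsum : ∀ b : ℕ, MvPolynomial.aeval f (MvPolynomial.psum (Fin N) K b)
      = (s.map (· ^ b)).sum := by
    intro b
    rw [← hf, Multiset.map_map]
    simp [MvPolynomial.psum]
    exact List.sum_ofFn.symm
  have h := congrArg (MvPolynomial.aeval f) (MvPolynomial.mul_esymm_eq_sum (Fin N) K k)
  simpa only [map_mul, map_natCast, map_sum, map_pow, map_neg, map_one,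
    MvPolynomial.aeval_esymm_eq_multiset_esymm, hf, hpsum] using h

/-- Two multisets of size `P` in a field with equal power sums of orders `1, …, P`
(and invertible `1, …, P`) are equal. -/
private lemma multiset_eq_of_psum {K : Type*} [Field K] (P : ℕ)
    (hchar : ∀ k : ℕ, 0 < k → k ≤ P → (k : K) ≠ 0)
    (s t : Multiset K) (hs : Multiset.card s = P) (ht : Multiset.card t = P)
    (hp : ∀ i, 0 < i → i ≤ P → (s.map (· ^ i)).sum = (t.map (· ^ i)).sum) :
    s = t := by
  have hesymm : ∀ k, k ≤ P → s.esymm k = t.esymm k := by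
    intro k
    induction k using Nat.strong_induction_on with
    | _ k IH =>
      intro hk
      rcases Nat.eq_zero_or_pos k with rfl | hk0
      · simp [Multiset.esymm]
      · have hkK : (k : K) ≠ 0 := hchar k hk0 hk
        have hsum : (∑ a ∈ Finset.HasAntidiagonal.antidiagonal k with a.1 < k,
              (-1 : K) ^ a.1 * s.esymm a.1 * (s.map (· ^ a.2)).sum)
            = ∑ a ∈ Finset.HasAntidiagonal.antidiagonal k with a.1 < k,
              (-1 : K) ^ a.1 * t.esymm a.1 * (t.map (· ^ a.2)).sum := by
          refine Finset.sum_congr rfl fun a ha => ?_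
          rw [Finset.mem_filter, Finset.HasAntidiagonal.mem_antidiagonal] at ha
          rw [IH a.1 ha.2 (le_trans (le_of_lt ha.2) hk),
            hp a.2 (by omega) (by omega)]
        have h : (k : K) * s.esymm k = (k : K) * t.esymm k := by
          rw [newton_multiset s k, newton_multiset t k, hsum]
        exact mul_left_cancel₀ hkK h
  have hprod : (s.map fun r => Polynomial.X - Polynomial.C r).prod
      = (t.map fun r => Polynomial.X - Polynomial.C r).prod := by
    rw [Multiset.prod_X_sub_X_eq_sum_esymm, Multiset.prod_X_sub_X_eq_sum_esymm, hs, ht]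
    refine Finset.sum_congr rfl fun j hj => ?_
    rw [hesymm j (Nat.lt_succ_iff.mp (Finset.mem_range.mp hj))]
  have h := congrArg Polynomial.roots hprod
  rwa [Polynomial.roots_multiset_prod_X_sub_C, Polynomial.roots_multiset_prod_X_sub_C] at h

/-- If `l` is a prime with `l ≥ n+1` and `m < n/2`, every nonzero vector of the analogous
Craig lattice `A_n^{(m,l)}` has squared Euclidean norm at least `2m`. -/
theorem craig_min_norm (n m l : ℕ) (hm : 0 < m) (hmn : 2 * m < n)
    (hl : n + 1 ≤ l) (hlp : l.Prime) :
    ∀ v ∈ craigLat n m l, v ≠ 0 → (2 * m : ℤ) ≤ ∑ j, (v j) ^ 2 := by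
  intro v hv hv0
  haveI : Fact l.Prime := ⟨hlp⟩
  haveI : NeZero l := ⟨hlp.pos.ne'⟩
  obtain ⟨hv1, hvm⟩ := Submodule.mem_inf.mp hv
  have happly : ∀ i, derAt1 n i v = ∑ j : Fin (n+1), ((j : ℕ).descFactorial i : ℤ) * v j := by
    intro i
    simp [derAt1, LinearMap.sum_apply, LinearMap.smul_apply, smul_eq_mul]
  have h0 : ∑ j, v j = 0 := by
    have h := LinearMap.mem_ker.mp hv1
    rw [happly] at h
    simpa using h
  have hdvd : ∀ k, k < m → (l : ℤ) ∣ ∑ j, v j * ((j : ℕ).descFactorial k : ℤ) := by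
    intro k hkm
    have hcomm : ∑ j, v j * ((j : ℕ).descFactorial k : ℤ)
        = ∑ j : Fin (n+1), ((j : ℕ).descFactorial k : ℤ) * v j :=
      Finset.sum_congr rfl fun j _ => mul_comm _ _
    rcases Nat.eq_zero_or_pos k with rfl | hk0
    · rw [hcomm, ← happly 0]
      rw [LinearMap.mem_ker.mp hv1]
      exact dvd_zero _
    · have h1 := (Submodule.mem_iInf _).mp hvm k
      have h2 := (Submodule.mem_iInf _).mp h1 (by simp [Finset.mem_Ioo]; omega)
      rw [Submodule.mem_comap, Ideal.mem_span_singleton, happly] at h2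
      rwa [hcomm]
  have hpow : ∀ i, i < m → (l : ℤ) ∣ ∑ j : Fin (n+1), v j * ((j : ℕ) : ℤ) ^ i :=
    fun i hi => dvd_pow_sum (fun j : Fin (n+1) => (j : ℕ)) l i v
      (fun k hk => hdvd k (by omega))
  -- positive and negative parts
  set Pp : ℕ := ∑ j, (v j).toNat with hPp
  set Pm : ℕ := ∑ j, (-(v j)).toNat with hPm
  have hPpm : Pp = Pm := by
    have h : ((Pp : ℤ)) - (Pm : ℤ) = 0 := by
      rw [hPp, hPm]
      push_cast
      rw [← Finset.sum_sub_distrib, ← h0]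
      exact Finset.sum_congr rfl fun j _ => by omega
    omega
  have hnorm : ((Pp : ℤ) + Pm) ≤ ∑ j, (v j) ^ 2 := by
    rw [hPp, hPm]
    push_cast
    rw [← Finset.sum_add_distrib]
    refine Finset.sum_le_sum fun j _ => ?_
    rcases le_or_gt 0 (v j) with h | h
    · have h1 : ((-(v j)).toNat : ℤ) = 0 := by omega
      have h2 : ((v j).toNat : ℤ) = v j := by omega
      rw [h1, h2, add_zero]
      nlinarith [sq_nonneg (v j - 1)]
    · have h1 : ((v j).toNat : ℤ) = 0 := by omega
      have h2 : ((-(v j)).toNat : ℤ) = -(v j) := by omega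
      rw [h1, h2, zero_add]
      nlinarith [sq_nonneg (v j + 1)]
  by_cases hPbig : m ≤ Pp
  · have : (2 * m : ℤ) ≤ (Pp : ℤ) + Pm := by
      have : (m : ℤ) ≤ Pp := by exact_mod_cast hPbig
      omega
    linarith
  -- now Pp < m : derive a contradiction (v = 0)
  push_neg at hPbig
  exfalso
  set S : Multiset (ZMod l) :=
    Multiset.bind Finset.univ.val
      (fun j : Fin (n+1) => Multiset.replicate (v j).toNat ((j : ℕ) : ZMod l)) with hS
  set T : Multiset (ZMod l) :=
    Multiset.bind Finset.univ.val
      (fun j : Fin (n+1) => Multiset.replicate (-(v j)).toNat ((j : ℕ) : ZMod l)) with hT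
  have hcard : ∀ (c : Fin (n+1) → ℕ),
      Multiset.card (Multiset.bind Finset.univ.val
        (fun j : Fin (n+1) => Multiset.replicate (c j) ((j : ℕ) : ZMod l))) = ∑ j, c j := by
    intro c
    rw [Multiset.card_bind]
    have hmc : (Multiset.map (Multiset.card ∘ fun j : Fin (n+1) =>
          Multiset.replicate (c j) ((j : ℕ) : ZMod l)) Finset.univ.val)
        = Multiset.map c Finset.univ.val :=
      Multiset.map_congr rfl (fun j _ => Multiset.card_replicate _ _)
    rw [hmc]
    rfl
  have hcardS : Multiset.card S = Pp := hcard _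
  have hcardT : Multiset.card T = Pp := (hcard _).trans hPpm.symm
  have hpsum : ∀ (c : Fin (n+1) → ℕ) (i : ℕ),
      ((Multiset.bind Finset.univ.val
        (fun j : Fin (n+1) => Multiset.replicate (c j) ((j : ℕ) : ZMod l))).map (· ^ i)).sum
      = ∑ j : Fin (n+1), (c j : ZMod l) * ((j : ℕ) : ZMod l) ^ i := by
    intro c i
    rw [Multiset.map_bind, Multiset.sum_bind]
    have hmc : (Multiset.map (fun j : Fin (n+1) =>
          (Multiset.map (· ^ i) (Multiset.replicate (c j) ((j : ℕ) : ZMod l))).sum)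
          Finset.univ.val)
        = Multiset.map (fun j : Fin (n+1) => (c j : ZMod l) * ((j : ℕ) : ZMod l) ^ i)
            Finset.univ.val :=
      Multiset.map_congr rfl (fun j _ => by
        rw [Multiset.map_replicate, Multiset.sum_replicate, nsmul_eq_mul])
    rw [hmc]
    rfl
  have hp : ∀ i, 0 < i → i ≤ Pp → (S.map (· ^ i)).sum = (T.map (· ^ i)).sum := by
    intro i hi0 hiP
    rw [hS, hT, hpsum, hpsum, ← sub_eq_zero, ← Finset.sum_sub_distrib]
    have heq : ∀ j : Fin (n+1),
        ((v j).toNat : ZMod l) * ((j : ℕ) : ZMod l) ^ i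
          - ((-(v j)).toNat : ZMod l) * ((j : ℕ) : ZMod l) ^ i
        = ((v j : ℤ) : ZMod l) * ((j : ℕ) : ZMod l) ^ i := by
      intro j
      have h1 : (((v j).toNat : ℤ) : ZMod l) - (((-(v j)).toNat : ℤ) : ZMod l)
          = ((v j : ℤ) : ZMod l) := by
        rw [← Int.cast_sub]
        congr 1
        omega
      push_cast at h1 ⊢
      rw [← sub_mul, h1]
    rw [Finset.sum_congr rfl fun j _ => heq j]
    have hcast : (((∑ j : Fin (n+1), v j * ((j : ℕ) : ℤ) ^ i : ℤ)) : ZMod l)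
        = ∑ j : Fin (n+1), ((v j : ℤ) : ZMod l) * ((j : ℕ) : ZMod l) ^ i := by
      push_cast
      rfl
    rw [← hcast, ZMod.intCast_zmod_eq_zero_iff_dvd]
    exact hpow i (by omega)
  have hST : S = T := by
    refine multiset_eq_of_psum Pp ?_ S T hcardS hcardT hp
    intro k hk0 hkP
    have hkl : k < l := by omega
    intro hzero
    rw [ZMod.natCast_eq_zero_iff] at hzero
    exact absurd (Nat.le_of_dvd hk0 hzero) (by omega)
  -- conclude v = 0
  have hcount : ∀ (c : Fin (n+1) → ℕ) (j0 : Fin (n+1)),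
      Multiset.count ((j0 : ℕ) : ZMod l)
        (Multiset.bind Finset.univ.val
          (fun j : Fin (n+1) => Multiset.replicate (c j) ((j : ℕ) : ZMod l))) = c j0 := by
    intro c j0
    rw [Multiset.count_bind]
    have : ∀ j : Fin (n+1),
        Multiset.count ((j0 : ℕ) : ZMod l) (Multiset.replicate (c j) ((j : ℕ) : ZMod l))
        = if j = j0 then c j else 0 := by
      intro j
      rw [Multiset.count_replicate]
      congr 1
      simp only [eq_iff_iff]
      constructor
      · intro h
        have h2 := congrArg ZMod.val h
        rw [ZMod.val_cast_of_lt (by omega), ZMod.val_cast_of_lt (by omega)] at h2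
        exact Fin.ext h2
      · intro h
        rw [h]
    calc (Multiset.map (fun j => Multiset.count ((j0 : ℕ) : ZMod l)
            (Multiset.replicate (c j) ((j : ℕ) : ZMod l))) Finset.univ.val).sum
        = ∑ j : Fin (n+1), Multiset.count ((j0 : ℕ) : ZMod l)
            (Multiset.replicate (c j) ((j : ℕ) : ZMod l)) := rfl
      _ = ∑ j : Fin (n+1), if j = j0 then c j else 0 :=
          Finset.sum_congr rfl fun j _ => this j
      _ = c j0 := by rw [Finset.sum_ite_eq' Finset.univ j0 c]; simp
  apply hv0
  funext j
  have h := congrArg (Multiset.count ((j : ℕ) : ZMod l)) hST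
  rw [hS, hT, hcount, hcount] at h
  have h2 : (v j).toNat = (-(v j)).toNat := h
  show v j = 0
  omega
end

section
/- For all integers n ≥ 1 and 0 ≤ r ≤ n/2, the sum Σ_{i=0}^{r} C(n,i) is at most 2^{n·H(r/n)}, where H(x) = -x log_2 x - (1-x) log_2 (1-x) is the binary entropy function (with H(0) = 0). -/
open Finset

/-- The binary entropy function `H(x) = -x log₂ x - (1-x) log₂ (1-x)` (with `H(0) = 0`,
since `Real.log 0 = 0` in Mathlib). -/
noncomputable def binEnt (x : ℝ) : ℝ :=
  -x * Real.logb 2 x - (1 - x) * Real.logb 2 (1 - x)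

/-- Entropy bound on the volume of a Hamming ball: for `n ≥ 1` and `r ≤ n/2`,
`∑_{i=0}^{r} C(n,i) ≤ 2^{n·H(r/n)}`. -/
theorem hamming_ball_entropy_bound (n r : ℕ) (hn : 1 ≤ n) (hr : 2 * r ≤ n) :
    (∑ i ∈ Finset.range (r + 1), (n.choose i : ℝ))
      ≤ (2 : ℝ) ^ ((n : ℝ) * binEnt ((r : ℝ) / (n : ℝ))) := by
  have hn0 : (0:ℝ) < n := by exact_mod_cast hn
  rcases Nat.eq_zero_or_pos r with rfl | hr0
  · simp [binEnt]
  set p : ℝ := (r:ℝ)/n with hpdef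
  have hp0 : 0 < p := by positivity
  have hrn : r ≤ n := by omega
  have hp2 : p ≤ 1/2 := by
    rw [div_le_iff₀ hn0]
    have : (2:ℝ) * r ≤ n := by exact_mod_cast hr
    linarith
  have h1p0 : 0 < 1 - p := by linarith
  have hple : p ≤ 1 - p := by linarith
  have hA0 : 0 < p ^ r * (1 - p) ^ (n - r) := by positivity
  have key : (∑ i ∈ Finset.range (r + 1), (n.choose i : ℝ)) * (p ^ r * (1 - p) ^ (n - r)) ≤ 1 := by
    rw [Finset.sum_mul]
    calc ∑ i ∈ Finset.range (r + 1), (n.choose i : ℝ) * (p ^ r * (1 - p) ^ (n - r))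
        ≤ ∑ i ∈ Finset.range (r + 1), (n.choose i : ℝ) * (p ^ i * (1 - p) ^ (n - i)) := by
          apply Finset.sum_le_sum
          intro i hi
          have hi' : i ≤ r := Nat.lt_succ_iff.mp (Finset.mem_range.mp hi)
          have hterm : p ^ r * (1 - p) ^ (n - r) ≤ p ^ i * (1 - p) ^ (n - i) := by
            have e1 : p ^ r = p ^ i * p ^ (r - i) := by rw [← pow_add]; congr 1; omega
            have e2 : (1 - p) ^ (n - i) = (1 - p) ^ (r - i) * (1 - p) ^ (n - r) := by
              rw [← pow_add]; congr 1; omega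
            rw [e1, e2]
            have h3 : p ^ (r - i) ≤ (1 - p) ^ (r - i) := pow_le_pow_left₀ hp0.le hple _
            calc p ^ i * p ^ (r - i) * (1 - p) ^ (n - r)
                ≤ p ^ i * (1 - p) ^ (r - i) * (1 - p) ^ (n - r) := by
                  apply mul_le_mul_of_nonneg_right _ (by positivity)
                  exact mul_le_mul_of_nonneg_left h3 (by positivity)
              _ = p ^ i * ((1 - p) ^ (r - i) * (1 - p) ^ (n - r)) := by ring
          exact mul_le_mul_of_nonneg_left hterm (by positivity)
      _ ≤ ∑ i ∈ Finset.range (n + 1), (n.choose i : ℝ) * (p ^ i * (1 - p) ^ (n - i)) := by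
          apply Finset.sum_le_sum_of_subset_of_nonneg
          · exact Finset.range_subset_range.mpr (by omega)
          · intro i _ _; positivity
      _ = (p + (1 - p)) ^ n := by
          rw [add_pow]
          apply Finset.sum_congr rfl
          intro i _; ring
      _ = 1 := by norm_num
  have hsum_le : (∑ i ∈ Finset.range (r + 1), (n.choose i : ℝ))
      ≤ (p ^ r * (1 - p) ^ (n - r))⁻¹ := by
    rw [← one_div, le_div_iff₀ hA0]
    exact key
  refine hsum_le.trans (le_of_eq ?_)
  -- show (p^r * (1-p)^(n-r))⁻¹ = 2 ^ (n * binEnt p)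
  have h2 : (1:ℝ) < 2 := one_lt_two
  have hpr : p ^ r = (2:ℝ) ^ ((r:ℝ) * Real.logb 2 p) := by
    rw [mul_comm, Real.rpow_mul (by norm_num), Real.rpow_logb (by norm_num) (by norm_num) hp0,
      Real.rpow_natCast]
  have h1pr : (1 - p) ^ (n - r) = (2:ℝ) ^ (((n - r : ℕ):ℝ) * Real.logb 2 (1 - p)) := by
    rw [mul_comm, Real.rpow_mul (by norm_num), Real.rpow_logb (by norm_num) (by norm_num) h1p0,
      Real.rpow_natCast]
  have hnp : (n:ℝ) * p = r := by rw [hpdef]; field_simp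
  have hn1p : (n:ℝ) * (1 - p) = ((n - r : ℕ):ℝ) := by
    rw [Nat.cast_sub hrn, hpdef]; field_simp
  have hexp : (n:ℝ) * binEnt p
      = -((r:ℝ) * Real.logb 2 p) + -(((n - r : ℕ):ℝ) * Real.logb 2 (1 - p)) := by
    unfold binEnt
    rw [← hnp, ← hn1p]; ring
  rw [hexp, Real.rpow_add (by norm_num), Real.rpow_neg (by norm_num),
    Real.rpow_neg (by norm_num), ← hpr, ← h1pr, mul_inv]
end

section
/- Let p be a prime with p ≡ 5 (mod 6) and 1667 ≤ p ≤ 2039, let n = 2p-2, m = ⌊(p-1)/16⌋, and let l be a prime with 2p < l < 2^{1.001}·p. Then 2^{⌊0.3776(p-1)⌋} · ⌊(p-1)/32⌋^{p-1} / l^{m - 1/2} > ((p+1)/12)^{p-1} / p^{(p-5)/6}, i.e., the center density of the lattice obtained from the analogous Craig lattice A_{2p-2}^{(m,l)} together with a binary linear [2p-2, ⌊0.3776(p-1)⌋, (p-1)/2] code exceeds the center density of the Mordell–Weil lattice of dimension 2p-2. -/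
lemma craig_H_of_nat (p k e s : ℕ)
    (h : (p + 1) ^ (p - 1) * (20014 * p) ^ ((p - 1) / 16)
      < 2 ^ k * ((p - 1) / 32) ^ (p - 1) * p ^ e * s * (12 ^ (p - 1) * 10000 ^ ((p - 1) / 16))) :
    (((p : ℝ) + 1) / 12) ^ (p - 1) * (20014 / 10000 * (p : ℝ)) ^ ((p - 1) / 16)
        < 2 ^ k * (((p - 1) / 32 : ℕ) : ℝ) ^ (p - 1) * (p : ℝ) ^ e * s := by
  have h' : (((p + 1) ^ (p - 1) * (20014 * p) ^ ((p - 1) / 16) : ℕ) : ℝ)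
      < ((2 ^ k * ((p - 1) / 32) ^ (p - 1) * p ^ e * s * (12 ^ (p - 1) * 10000 ^ ((p - 1) / 16)) : ℕ) : ℝ) := by
    exact_mod_cast h
  push_cast at h'
  rw [div_pow, mul_pow, div_pow]
  rw [show ((p:ℝ) + 1) ^ (p - 1) / 12 ^ (p - 1) * ((20014:ℝ) ^ ((p - 1) / 16) / 10000 ^ ((p - 1) / 16) * (p:ℝ) ^ ((p - 1) / 16))
      = ((p:ℝ) + 1) ^ (p - 1) * ((20014:ℝ) ^ ((p - 1) / 16) * (p:ℝ) ^ ((p - 1) / 16)) / (12 ^ (p - 1) * 10000 ^ ((p - 1) / 16)) by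
      field_simp]
  rw [div_lt_iff₀ (by positivity)]
  simpa [mul_pow] using h'

lemma craig_key (p l e k s : ℕ) (hp1 : 0 < p) (hl1 : 2 * p < l)
    (hl2 : (l : ℝ) < 20014 / 10000 * p)
    (hs0 : 0 < s)
    (he : ((p : ℝ) - 5) / 6 = (e : ℕ))
    (hk : (k : ℝ) ≤ 0.3776 * ((p : ℝ) - 1))
    (hs : s ^ 2 ≤ 2 * p)
    (H : (((p : ℝ) + 1) / 12) ^ (p - 1) * (20014 / 10000 * (p : ℝ)) ^ ((p - 1) / 16)
        < 2 ^ k * (((p - 1) / 32 : ℕ) : ℝ) ^ (p - 1) * (p : ℝ) ^ e * s) :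
    (2 : ℝ) ^ (⌊(0.3776 : ℝ) * ((p : ℝ) - 1)⌋₊) * (((p - 1) / 32 : ℕ) : ℝ) ^ (p - 1)
        / (l : ℝ) ^ ((((p - 1) / 16 : ℕ) : ℝ) - 1 / 2)
      > (((p : ℝ) + 1) / 12) ^ (p - 1) / (p : ℝ) ^ (((p : ℝ) - 5) / 6) := by
  have hp0 : (0:ℝ) < p := by exact_mod_cast hp1
  have hl0' : 0 < l := by omega
  have hl0 : (0:ℝ) < l := by exact_mod_cast hl0'
  have hs2l : s ^ 2 ≤ l := by omega
  have hsl : (s:ℝ) ≤ Real.sqrt l := by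
    have h1 : (s:ℝ)^2 ≤ (l:ℝ) := by exact_mod_cast hs2l
    calc (s:ℝ) = Real.sqrt ((s:ℝ)^2) := (Real.sqrt_sq (by positivity)).symm
    _ ≤ Real.sqrt l := Real.sqrt_le_sqrt h1
  have hs0' : (0:ℝ) < s := by exact_mod_cast hs0
  have hrw : (l:ℝ) ^ ((((p-1)/16 : ℕ):ℝ) - 1/2)
      = (l:ℝ) ^ ((p-1)/16 : ℕ) / Real.sqrt l := by
    rw [Real.rpow_sub hl0, Real.rpow_natCast, ← Real.sqrt_eq_rpow]
  have hfl : (2:ℝ)^k ≤ (2:ℝ)^(⌊(0.3776:ℝ)*((p:ℝ)-1)⌋₊) :=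
    pow_le_pow_right₀ (by norm_num) (Nat.le_floor hk)
  rw [he, Real.rpow_natCast, gt_iff_lt,
    div_lt_div_iff₀ (by positivity) (Real.rpow_pos_of_pos hl0 _)]
  have step1 : (l:ℝ)^((p-1)/16:ℕ) / Real.sqrt l
      ≤ (20014/10000*(p:ℝ))^((p-1)/16:ℕ) / s :=
    div_le_div₀ (by positivity) (pow_le_pow_left₀ hl0.le hl2.le _) hs0' hsl
  calc (((p:ℝ)+1)/12)^(p-1) * (l:ℝ) ^ ((((p-1)/16 : ℕ):ℝ) - 1/2)
      = (((p:ℝ)+1)/12)^(p-1) * ((l:ℝ)^((p-1)/16:ℕ) / Real.sqrt l) := by rw [hrw]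
    _ ≤ (((p:ℝ)+1)/12)^(p-1) * ((20014/10000*(p:ℝ))^((p-1)/16:ℕ) / s) :=
        mul_le_mul_of_nonneg_left step1 (by positivity)
    _ = (((p:ℝ)+1)/12)^(p-1) * (20014/10000*(p:ℝ))^((p-1)/16:ℕ) / s := by ring
    _ < (2 ^ k * (((p - 1) / 32 : ℕ) : ℝ) ^ (p - 1) * (p : ℝ) ^ e * s) / s :=
        (div_lt_div_iff_of_pos_right hs0').mpr H
    _ = 2 ^ k * (((p - 1) / 32 : ℕ) : ℝ) ^ (p - 1) * (p : ℝ) ^ e := by field_simp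
    _ ≤ 2 ^ (⌊(0.3776:ℝ)*((p:ℝ)-1)⌋₊) * (((p - 1) / 32 : ℕ) : ℝ) ^ (p - 1) * (p : ℝ) ^ e := by
        gcongr


/-- For a prime `p ≡ 5 (mod 6)` with `1667 ≤ p ≤ 2039`, `m = ⌊(p-1)/16⌋`, and a prime `l`
with `2p < l < 2^{1.001} p`, the center density
`2^{⌊0.3776(p-1)⌋} ⌊(p-1)/32⌋^{p-1} / l^{m-1/2}` of the lattice built from the analogous
Craig lattice `A_{2p-2}^{(m,l)}` and a binary `[2p-2, ⌊0.3776(p-1)⌋, (p-1)/2]` code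
exceeds the center density `((p+1)/12)^{p-1} / p^{(p-5)/6}` of the Mordell–Weil lattice
of dimension `2p-2`. -/
theorem beats_mordell_weil (p l : ℕ) (hp : p.Prime) (hpm : p % 6 = 5)
    (h1 : 1667 ≤ p) (h2 : p ≤ 2039)
    (hl : l.Prime) (hl1 : 2 * p < l) (hl2 : (l : ℝ) < (2 : ℝ) ^ ((1.001 : ℝ)) * (p : ℝ)) :
    (2 : ℝ) ^ (⌊(0.3776 : ℝ) * ((p : ℝ) - 1)⌋₊) * (((p - 1) / 32 : ℕ) : ℝ) ^ (p - 1)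
        / (l : ℝ) ^ ((((p - 1) / 16 : ℕ) : ℝ) - 1 / 2)
      > (((p : ℝ) + 1) / 12) ^ (p - 1) / (p : ℝ) ^ (((p : ℝ) - 5) / 6) := by
  have hb : (2:ℝ) ^ ((1.001:ℝ)) ≤ 20014/10000 := by
    have h : ((2:ℝ)^((1.001:ℝ)))^(1000:ℕ) ≤ ((20014:ℝ)/10000)^(1000:ℕ) := by
      rw [← Real.rpow_natCast ((2:ℝ)^((1.001:ℝ))), ← Real.rpow_mul (by norm_num),
        show (1.001:ℝ)*(1000:ℕ) = ((1001:ℕ):ℝ) by norm_num, Real.rpow_natCast]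
      rw [show (1001:ℕ) = 7*143 by norm_num, show (1000:ℕ) = 8*125 by norm_num, pow_mul, pow_mul]
      norm_num
    exact le_of_pow_le_pow_left₀ (by norm_num) (by norm_num) h
  have hl2' : (l : ℝ) < 20014/10000 * p :=
    lt_of_lt_of_le hl2 (mul_le_mul_of_nonneg_right hb (by positivity))
  have hmem : p ∈ ([1667, 1697, 1709, 1721, 1733, 1787, 1811, 1823, 1847, 1871, 1877, 1889, 1901, 1907, 1913, 1931, 1949, 1973, 1979, 1997, 2003, 2027, 2039] : List ℕ) := by
    interval_cases p <;>
      first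
        | (exfalso; omega)
        | decide
        | (exfalso; revert hp; norm_num)
  fin_cases hmem
  · exact craig_key 1667 l 277 629 57 (by norm_num) hl1 hl2' (by norm_num) (by norm_num)
      (by norm_num) (by norm_num) (craig_H_of_nat _ _ _ _ (by decide +kernel))
  · exact craig_key 1697 l 282 640 58 (by norm_num) hl1 hl2' (by norm_num) (by norm_num)
      (by norm_num) (by norm_num) (craig_H_of_nat _ _ _ _ (by decide +kernel))
  · exact craig_key 1709 l 284 644 58 (by norm_num) hl1 hl2' (by norm_num) (by norm_num)
      (by norm_num) (by norm_num) (craig_H_of_nat _ _ _ _ (by decide +kernel))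
  · exact craig_key 1721 l 286 649 58 (by norm_num) hl1 hl2' (by norm_num) (by norm_num)
      (by norm_num) (by norm_num) (craig_H_of_nat _ _ _ _ (by decide +kernel))
  · exact craig_key 1733 l 288 654 58 (by norm_num) hl1 hl2' (by norm_num) (by norm_num)
      (by norm_num) (by norm_num) (craig_H_of_nat _ _ _ _ (by decide +kernel))
  · exact craig_key 1787 l 297 674 59 (by norm_num) hl1 hl2' (by norm_num) (by norm_num)
      (by norm_num) (by norm_num) (craig_H_of_nat _ _ _ _ (by decide +kernel))
  · exact craig_key 1811 l 301 683 60 (by norm_num) hl1 hl2' (by norm_num) (by norm_num)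
      (by norm_num) (by norm_num) (craig_H_of_nat _ _ _ _ (by decide +kernel))
  · exact craig_key 1823 l 303 687 60 (by norm_num) hl1 hl2' (by norm_num) (by norm_num)
      (by norm_num) (by norm_num) (craig_H_of_nat _ _ _ _ (by decide +kernel))
  · exact craig_key 1847 l 307 697 60 (by norm_num) hl1 hl2' (by norm_num) (by norm_num)
      (by norm_num) (by norm_num) (craig_H_of_nat _ _ _ _ (by decide +kernel))
  · exact craig_key 1871 l 311 706 61 (by norm_num) hl1 hl2' (by norm_num) (by norm_num)
      (by norm_num) (by norm_num) (craig_H_of_nat _ _ _ _ (by decide +kernel))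
  · exact craig_key 1877 l 312 708 61 (by norm_num) hl1 hl2' (by norm_num) (by norm_num)
      (by norm_num) (by norm_num) (craig_H_of_nat _ _ _ _ (by decide +kernel))
  · exact craig_key 1889 l 314 712 61 (by norm_num) hl1 hl2' (by norm_num) (by norm_num)
      (by norm_num) (by norm_num) (craig_H_of_nat _ _ _ _ (by decide +kernel))
  · exact craig_key 1901 l 316 717 61 (by norm_num) hl1 hl2' (by norm_num) (by norm_num)
      (by norm_num) (by norm_num) (craig_H_of_nat _ _ _ _ (by decide +kernel))
  · exact craig_key 1907 l 317 719 61 (by norm_num) hl1 hl2' (by norm_num) (by norm_num)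
      (by norm_num) (by norm_num) (craig_H_of_nat _ _ _ _ (by decide +kernel))
  · exact craig_key 1913 l 318 721 61 (by norm_num) hl1 hl2' (by norm_num) (by norm_num)
      (by norm_num) (by norm_num) (craig_H_of_nat _ _ _ _ (by decide +kernel))
  · exact craig_key 1931 l 321 728 62 (by norm_num) hl1 hl2' (by norm_num) (by norm_num)
      (by norm_num) (by norm_num) (craig_H_of_nat _ _ _ _ (by decide +kernel))
  · exact craig_key 1949 l 324 735 62 (by norm_num) hl1 hl2' (by norm_num) (by norm_num)
      (by norm_num) (by norm_num) (craig_H_of_nat _ _ _ _ (by decide +kernel))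
  · exact craig_key 1973 l 328 744 62 (by norm_num) hl1 hl2' (by norm_num) (by norm_num)
      (by norm_num) (by norm_num) (craig_H_of_nat _ _ _ _ (by decide +kernel))
  · exact craig_key 1979 l 329 746 62 (by norm_num) hl1 hl2' (by norm_num) (by norm_num)
      (by norm_num) (by norm_num) (craig_H_of_nat _ _ _ _ (by decide +kernel))
  · exact craig_key 1997 l 332 753 63 (by norm_num) hl1 hl2' (by norm_num) (by norm_num)
      (by norm_num) (by norm_num) (craig_H_of_nat _ _ _ _ (by decide +kernel))
  · exact craig_key 2003 l 333 755 63 (by norm_num) hl1 hl2' (by norm_num) (by norm_num)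
      (by norm_num) (by norm_num) (craig_H_of_nat _ _ _ _ (by decide +kernel))
  · exact craig_key 2027 l 337 765 63 (by norm_num) hl1 hl2' (by norm_num) (by norm_num)
      (by norm_num) (by norm_num) (craig_H_of_nat _ _ _ _ (by decide +kernel))
  · exact craig_key 2039 l 339 769 63 (by norm_num) hl1 hl2' (by norm_num) (by norm_num)
      (by norm_num) (by norm_num) (craig_H_of_nat _ _ _ _ (by decide +kernel))
end
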